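/- If μ is a time-consistent reconciliation map from (T;t,σ) to S with witnessing time maps τ_T, τ_S, then τ_T and τ_S also satisfy conditions (D1), (D2), and (D3). -/

import Mathlib

/-- A rooted tree on vertex type `V`, encoded by a parent map.
Edges are directed away from the root; the edge into a non-root vertex `v`
is `(par v, v)`. -/
structure RTree (V : Type*) where
  root : V
  par : V → V
  par_root : par root = root
  par_ne : ∀ v, v ≠ root → par v ≠ v
  reaches : ∀ v, ∃ k, par^[k] v = root

namespace RTree

variable {V : Type*}

/-- `anc T x y` : `x` is a descendant of `y`, i.e. `x ⪯_T y`. -/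
def anc (T : RTree V) (x y : V) : Prop := ∃ k, (T.par)^[k] x = y

/-- strict descendant: `x ≺_T y`. -/
def sanc (T : RTree V) (x y : V) : Prop := T.anc x y ∧ x ≠ y

def IsLeaf (T : RTree V) (v : V) : Prop := ∀ u, T.par u = v → u = v

/-- `x` is a least common ancestor of the set `A`. -/
def IsLca (T : RTree V) (A : Set V) (x : V) : Prop :=
  (∀ a ∈ A, T.anc a x) ∧ ∀ y, (∀ a ∈ A, T.anc a y) → T.anc x y

/-- A time map: strict descendants have strictly larger time stamps. -/
def IsTimeMap (T : RTree V) (τ : V → ℝ) : Prop :=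
  ∀ x y, T.sanc x y → τ y < τ x

end RTree

/-- Event labels: speciation `•`, duplication `□`, HGT `△`, leaf `⊙`. -/
inductive Event where
  | spec | dup | hgt | leaf
deriving DecidableEq

/-- The common setup: a gene tree `T` (vertices `V`) with event labels `t`,
transfer edges `trans` (an edge is recorded by its child endpoint),
a species tree `S` (vertices `W`), the map `sig = σ` assigning to each gene
(leaf of `T`) the species (leaf of `S`) it resides in, and a least common
ancestor function `lca` on the species tree. -/
structure ReconSetup (V W : Type*) where
  T : RTree V
  S : RTree W
  t : V → Event
  trans : Set V
  sig : V → W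
  lca : Set W → W
  trans_ne_root : ∀ v ∈ trans, v ≠ T.root
  trans_hgt : ∀ v ∈ trans, t (T.par v) = Event.hgt
  leaf_iff : ∀ v, T.IsLeaf v ↔ t v = Event.leaf
  sig_leaf : ∀ v, T.IsLeaf v → S.IsLeaf (sig v)
  lca_spec : ∀ A : Set W, A.Nonempty → S.IsLca A (lca A)

/-- lower endpoint of a vertex-or-edge of the species tree
(an edge `(S.par y, y)` is encoded as `Sum.inr y`; a vertex `x` as `Sum.inl x`). -/
def lowPt {W : Type*} : W ⊕ W → W := Sum.elim id id

namespace ReconSetup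

variable {V W : Type*}

/-- ancestor order of the forest `T_{E̅}` obtained by deleting transfer edges. -/
def fanc (R : ReconSetup V W) (x y : V) : Prop :=
  ∃ k, (R.T.par)^[k] x = y ∧ ∀ i < k, (R.T.par)^[i] x ∉ R.trans

def sfanc (R : ReconSetup V W) (x y : V) : Prop := R.fanc x y ∧ x ≠ y

/-- `σ_{T̅}(u)`: the species of the leaves of `T` below `u` in the forest `T_{E̅}`. -/
def sigmaBar (R : ReconSetup V W) (u : V) : Set W :=
  R.sig '' {l | R.T.IsLeaf l ∧ R.fanc l u}

/-- Ancestor order of `S` extended to vertices and edges: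
`z ⪯ (x,y) ↔ z ⪯ y`, `(x,y) ⪯ z ↔ x ⪯ z`, `(x,y) ⪯ (a,b) ↔ y ⪯ b`. -/
def extLE (R : ReconSetup V W) : W ⊕ W → W ⊕ W → Prop
  | Sum.inl a, Sum.inl b => R.S.anc a b
  | Sum.inl a, Sum.inr y => R.S.anc a y
  | Sum.inr y, Sum.inl b => R.S.anc (R.S.par y) b
  | Sum.inr y, Sum.inr z => R.S.anc y z

def extLT (R : ReconSetup V W) (p q : W ⊕ W) : Prop := R.extLE p q ∧ ¬ R.extLE q p

def incomp (R : ReconSetup V W) (p q : W ⊕ W) : Prop := ¬ R.extLE p q ∧ ¬ R.extLE q p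

def IsDupHGT (R : ReconSetup V W) (u : V) : Prop :=
  R.t u = Event.dup ∨ R.t u = Event.hgt

/-- (M1) leaf constraint. -/
def M1 (R : ReconSetup V W) (μ : V → W ⊕ W) : Prop :=
  ∀ u, R.T.IsLeaf u → μ u = Sum.inl (R.sig u)

/-- (M2i) speciation vertices map to the lca of the species below them. -/
def M2i (R : ReconSetup V W) (μ : V → W ⊕ W) : Prop :=
  ∀ u, R.t u = Event.spec → μ u = Sum.inl (R.lca (R.sigmaBar u))

/-- (M2ii) duplication/HGT vertices map to edges of `S`. -/
def M2ii (R : ReconSetup V W) (μ : V → W ⊕ W) : Prop :=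
  ∀ u, R.IsDupHGT u → ∃ y, y ≠ R.S.root ∧ μ u = Sum.inr y

/-- (M2iii) the endpoints of a transfer edge receive incomparable images. -/
def M2iii (R : ReconSetup V W) (μ : V → W ⊕ W) : Prop :=
  ∀ v ∈ R.trans, R.incomp (μ (R.T.par v)) (μ v)

/-- (M3) ancestor constraint within components of `T_{E̅}`. -/
def M3 (R : ReconSetup V W) (μ : V → W ⊕ W) : Prop :=
  ∀ v w, R.sfanc v w →
    ((R.IsDupHGT v ∧ R.IsDupHGT w) → R.extLE (μ v) (μ w)) ∧
    (¬ (R.IsDupHGT v ∧ R.IsDupHGT w) → R.extLT (μ v) (μ w))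

/-- `μ` is a reconciliation map from `(T;t,σ)` to `S`. -/
def IsRecon (R : ReconSetup V W) (μ : V → W ⊕ W) : Prop :=
  R.M1 μ ∧ R.M2i μ ∧ R.M2ii μ ∧ R.M2iii μ ∧ R.M3 μ

/-- (O1) every internal vertex has at least two children. -/
def O1 (R : ReconSetup V W) : Prop :=
  ∀ v, ¬ R.T.IsLeaf v →
    ∃ a b, a ≠ b ∧ R.T.par a = v ∧ R.T.par b = v ∧ a ≠ v ∧ b ≠ v

/-- (O2) every HGT vertex has a transfer child edge and a non-transfer child edge. -/
def O2 (R : ReconSetup V W) : Prop :=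
  ∀ v, R.t v = Event.hgt →
    (∃ c, R.T.par c = v ∧ c ∈ R.trans) ∧ (∃ c, R.T.par c = v ∧ c ≠ v ∧ c ∉ R.trans)

/-- (Σ1) a speciation vertex has two children whose species sets are disjoint. -/
def Sigma1 (R : ReconSetup V W) : Prop :=
  ∀ x, R.t x = Event.spec →
    ∃ v w, v ≠ w ∧ R.T.par v = x ∧ R.T.par w = x ∧ v ≠ x ∧ w ≠ x ∧
      R.sigmaBar v ∩ R.sigmaBar w = ∅

/-- (Σ2) the species sets across a transfer edge are disjoint. -/
def Sigma2 (R : ReconSetup V W) : Prop :=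
  ∀ w ∈ R.trans, R.sigmaBar (R.T.par w) ∩ R.sigmaBar w = ∅

/-- the gene tree is binary. -/
def BinaryT (R : ReconSetup V W) : Prop :=
  ∀ v, ¬ R.T.IsLeaf v →
    ∃ a b, a ≠ b ∧ ∀ c, (R.T.par c = v ∧ c ≠ v) ↔ (c = a ∨ c = b)

/-- the species tree is binary. -/
def BinaryS (R : ReconSetup V W) : Prop :=
  ∀ v, ¬ R.S.IsLeaf v →
    ∃ a b, a ≠ b ∧ ∀ c, (R.S.par c = v ∧ c ≠ v) ↔ (c = a ∨ c = b)

/-- (C1) speciation vertices and leaves get the same time as their image. -/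
def C1 (R : ReconSetup V W) (μ : V → W ⊕ W) (τT : V → ℝ) (τS : W → ℝ) : Prop :=
  ∀ u x, (R.t u = Event.spec ∨ R.t u = Event.leaf) → μ u = Sum.inl x → τT u = τS x

/-- (C2) a vertex mapped into an edge `(x,y)` gets a time strictly between
the times of `x` and `y`. -/
def C2 (R : ReconSetup V W) (μ : V → W ⊕ W) (τT : V → ℝ) (τS : W → ℝ) : Prop :=
  ∀ u y, R.IsDupHGT u → μ u = Sum.inr y → τS (R.S.par y) < τT u ∧ τT u < τS y

/-- `μ` is a time-consistent reconciliation map. -/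
def TimeConsistent (R : ReconSetup V W) (μ : V → W ⊕ W) : Prop :=
  ∃ τT τS, R.T.IsTimeMap τT ∧ R.S.IsTimeMap τS ∧ R.C1 μ τT τS ∧ R.C2 μ τT τS

/-- (D1). -/
def D1 (R : ReconSetup V W) (μ : V → W ⊕ W) (τT : V → ℝ) (τS : W → ℝ) : Prop :=
  ∀ u x, μ u = Sum.inl x → τT u = τS x

/-- (D2). -/
def D2 (R : ReconSetup V W) (τT : V → ℝ) (τS : W → ℝ) : Prop :=
  ∀ u x, R.IsDupHGT u → R.S.anc x (R.lca (R.sigmaBar u)) → τT u < τS x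

/-- (D3), for a transfer edge `(T.par v, v)` with `v ∈ trans`. -/
def D3 (R : ReconSetup V W) (τT : V → ℝ) (τS : W → ℝ) : Prop :=
  ∀ v x, v ∈ R.trans →
    R.S.anc (R.lca (R.sigmaBar (R.T.par v) ∪ R.sigmaBar v)) x → τS x < τT (R.T.par v)

/-- The DTL-scenario axioms (I)-(IV) for a map `γ : V(T) → V(S)`. -/
def DTL (R : ReconSetup V W) (γ : V → W) : Prop :=
  (∀ u, R.T.IsLeaf u → γ u = R.sig u) ∧
  (∀ u v w, v ≠ w → R.T.par v = u → R.T.par w = u → v ≠ u → w ≠ u →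
    ((¬ R.S.sanc (γ u) (γ v) ∧ ¬ R.S.sanc (γ u) (γ w)) ∧
     (R.S.anc (γ v) (γ u) ∨ R.S.anc (γ w) (γ u)))) ∧
  (∀ v, v ≠ R.T.root →
    (v ∈ R.trans ↔ (¬ R.S.anc (γ (R.T.par v)) (γ v) ∧ ¬ R.S.anc (γ v) (γ (R.T.par v))))) ∧
  (∀ u v w, v ≠ w → R.T.par v = u → R.T.par w = u → v ≠ u → w ≠ u →
    ((R.t u = Event.hgt ↔ (v ∈ R.trans ∨ w ∈ R.trans)) ∧
     (R.t u = Event.spec →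
       γ u = R.lca {γ v, γ w} ∧ ¬ R.S.anc (γ v) (γ w) ∧ ¬ R.S.anc (γ w) (γ v)) ∧
     (R.t u = Event.dup → R.S.anc (R.lca {γ v, γ w}) (γ u))))

end ReconSetup

/-- A directed graph (relation) is acyclic: no edge closes a directed cycle. -/
def Acyclic {α : Type*} (r : α → α → Prop) : Prop :=
  ∀ x y, r x y → ¬ Relation.ReflTransGen r y x

section Aux

variable {V W : Type*}

lemma RTree.anc_refl (T : RTree V) (a : V) : T.anc a a := ⟨0, rfl⟩

lemma RTree.anc_trans (T : RTree V) {a b c : V} (h1 : T.anc a b) (h2 : T.anc b c) :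
    T.anc a c := by
  obtain ⟨k, hk⟩ := h1; obtain ⟨j, hj⟩ := h2
  exact ⟨j + k, by rw [Function.iterate_add_apply, hk, hj]⟩

lemma RTree.iterate_root (T : RTree V) (n : ℕ) : T.par^[n] T.root = T.root :=
  Function.iterate_fixed T.par_root n

lemma RTree.anc_antisymm (T : RTree V) {a b : V} (h1 : T.anc a b) (h2 : T.anc b a) :
    a = b := by
  obtain ⟨k, hk⟩ := h1; obtain ⟨j, hj⟩ := h2
  have hper : T.par^[j + k] a = a := by
    rw [Function.iterate_add_apply, hk, hj]
  rcases Nat.eq_zero_or_pos (j + k) with h0 | hp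
  · have hk0 : k = 0 := by omega
    rw [hk0] at hk; exact hk
  · have hmul : ∀ n, T.par^[n * (j + k)] a = a := by
      intro n
      induction n with
      | zero => simp
      | succ n ih =>
        have : (n + 1) * (j + k) = n * (j + k) + (j + k) := by ring
        rw [this, Function.iterate_add_apply, hper, ih]
    obtain ⟨m, hm⟩ := T.reaches a
    have hge : m ≤ m * (j + k) := Nat.le_mul_of_pos_right m hp
    have haroot : a = T.root := by
      have : T.par^[m * (j + k)] a = T.par^[m * (j + k) - m] (T.par^[m] a) := by
        rw [← Function.iterate_add_apply]
        congr 1; omega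
      rw [hmul, hm, T.iterate_root] at this
      exact this
    subst haroot
    rw [T.iterate_root] at hk
    exact hk

lemma RTree.anc_comparable (T : RTree V) {a x y : V} (h1 : T.anc a x) (h2 : T.anc a y) :
    T.anc x y ∨ T.anc y x := by
  obtain ⟨k, hk⟩ := h1; obtain ⟨j, hj⟩ := h2
  rcases le_total k j with h | h
  · left
    exact ⟨j - k, by rw [← hk, ← Function.iterate_add_apply, Nat.sub_add_cancel h, hj]⟩
  · right
    exact ⟨k - j, by rw [← hj, ← Function.iterate_add_apply, Nat.sub_add_cancel h, hk]⟩

/-- For a time map, descendants have (weakly) larger times. -/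
lemma RTree.timeMap_le (T : RTree V) {τ : V → ℝ} (hτ : T.IsTimeMap τ) {a b : V}
    (h : T.anc a b) : τ b ≤ τ a := by
  by_cases hab : a = b
  · rw [hab]
  · exact le_of_lt (hτ a b ⟨h, hab⟩)

/-- Every vertex has a leaf below it in the forest `T_{E̅}`. -/
lemma ReconSetup.leaf_below [Fintype V] (R : ReconSetup V W) (hO1 : R.O1) (hO2 : R.O2) :
    ∀ u, ∃ l, R.T.IsLeaf l ∧ R.fanc l u := by
  classical
  have H : ∀ n u, ({v | R.T.anc v u}).ncard ≤ n → ∃ l, R.T.IsLeaf l ∧ R.fanc l u := by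
    intro n
    induction n with
    | zero =>
      intro u h
      exfalso
      have hpos : 0 < ({v | R.T.anc v u}).ncard :=
        (Set.ncard_pos (Set.toFinite _)).mpr ⟨u, R.T.anc_refl u⟩
      omega
    | succ n ih =>
      intro u hcard
      by_cases hl : R.T.IsLeaf u
      · exact ⟨u, hl, 0, rfl, fun i hi => absurd hi (Nat.not_lt_zero i)⟩
      · -- find a child c of u with c ≠ u and c ∉ trans
        have hc : ∃ c, R.T.par c = u ∧ c ≠ u ∧ c ∉ R.trans := by
          by_cases hh : R.t u = Event.hgt
          · obtain ⟨_, c, hc1, hc2, hc3⟩ := hO2 u hh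
            exact ⟨c, hc1, hc2, hc3⟩
          · obtain ⟨a, b, hab, hpa, hpb, hau, hbu⟩ := hO1 u hl
            refine ⟨a, hpa, hau, fun ha => ?_⟩
            have := R.trans_hgt a ha
            rw [hpa] at this
            exact hh this
        obtain ⟨c, hpc, hcu, hct⟩ := hc
        have hsub : {v | R.T.anc v c} ⊆ {v | R.T.anc v u} := by
          intro v ⟨k, hk⟩
          exact ⟨k + 1, by rw [Function.iterate_succ_apply', hk, hpc]⟩
        have hnotmem : u ∉ {v | R.T.anc v c} := by
          intro hmem
          exact hcu (R.T.anc_antisymm ⟨1, by simp [hpc]⟩ hmem)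
        have hlt : ({v | R.T.anc v c}).ncard < ({v | R.T.anc v u}).ncard := by
          apply Set.ncard_lt_ncard _ (Set.toFinite _)
          exact ⟨hsub, fun hsup => hnotmem (hsup (R.T.anc_refl u))⟩
        obtain ⟨l, hll, k, hk, hnt⟩ := ih c (by omega)
        refine ⟨l, hll, k + 1, by rw [Function.iterate_succ_apply', hk, hpc], ?_⟩
        intro i hi
        rcases Nat.lt_or_ge i k with h | h
        · exact hnt i h
        · have : i = k := by omega
          rw [this, hk]; exact hct
  exact fun u => H _ u le_rfl

/-- Every species in `σ̄(u)` is below `lowPt (μ u)`. -/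
lemma ReconSetup.sigmaBar_below (R : ReconSetup V W) {μ : V → W ⊕ W}
    (hrec : R.IsRecon μ) {u : V} {a : W} (ha : a ∈ R.sigmaBar u) :
    R.S.anc a (lowPt (μ u)) := by
  obtain ⟨hM1, hM2i, hM2ii, hM2iii, hM3⟩ := hrec
  obtain ⟨l, ⟨hleaf, hfanc⟩, rfl⟩ := ha
  by_cases hlu : l = u
  · subst hlu
    rw [hM1 l hleaf]
    exact R.S.anc_refl _
  · have hnd : ¬ (R.IsDupHGT l ∧ R.IsDupHGT u) := by
      rintro ⟨hd, _⟩
      have := (R.leaf_iff l).mp hleaf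
      rcases hd with h | h <;> rw [this] at h <;> exact Event.noConfusion h
    have hlt := ((hM3 l u ⟨hfanc, hlu⟩).2 hnd).1
    rw [hM1 l hleaf] at hlt
    cases hμu : μ u with
    | inl b => rw [hμu] at hlt; exact hlt
    | inr y => rw [hμu] at hlt; exact hlt

end Aux

/-- if `μ` is a time-consistent reconciliation map with witnessing
time maps `τ_T, τ_S` (satisfying (C1), (C2)), then `τ_T, τ_S` also satisfy
(D1), (D2) and (D3). -/
theorem stmt12 {V W : Type*} [Fintype V] (R : ReconSetup V W) (μ : V → W ⊕ W)
    (hrec : R.IsRecon μ) (hO1 : R.O1) (hO2 : R.O2) (hS1 : R.Sigma1) (hS2 : R.Sigma2)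
    (τT : V → ℝ) (τS : W → ℝ)
    (hτT : R.T.IsTimeMap τT) (hτS : R.S.IsTimeMap τS)
    (hC1 : R.C1 μ τT τS) (hC2 : R.C2 μ τT τS) :
    R.D1 μ τT τS ∧ R.D2 τT τS ∧ R.D3 τT τS := by
  obtain ⟨hM1, hM2i, hM2ii, hM2iii, hM3⟩ := hrec
  have hrec' : R.IsRecon μ := ⟨hM1, hM2i, hM2ii, hM2iii, hM3⟩
  -- lca(σ̄ u) is below lowPt (μ u)
  have hlca_below : ∀ u, R.S.anc (R.lca (R.sigmaBar u)) (lowPt (μ u)) := by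
    intro u
    obtain ⟨l, hl, hf⟩ := R.leaf_below hO1 hO2 u
    have hne : (R.sigmaBar u).Nonempty := ⟨R.sig l, l, ⟨hl, hf⟩, rfl⟩
    exact (R.lca_spec _ hne).2 _ (fun a ha => R.sigmaBar_below hrec' ha)
  constructor
  · -- D1
    intro u x hμ
    have ht : R.t u = Event.spec ∨ R.t u = Event.leaf := by
      rcases h : R.t u with _ | _ | _ | _
      · exact Or.inl rfl
      · obtain ⟨y, _, hy⟩ := hM2ii u (Or.inl h); rw [hy] at hμ; cases hμ
      · obtain ⟨y, _, hy⟩ := hM2ii u (Or.inr h); rw [hy] at hμ; cases hμ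
      · exact Or.inr rfl
    exact hC1 u x ht hμ
  constructor
  · -- D2
    intro u x hdup hx
    obtain ⟨y, hyroot, hμu⟩ := hM2ii u hdup
    have h2 := (hC2 u y hdup hμu).2
    have hlow : R.S.anc (R.lca (R.sigmaBar u)) y := by
      have := hlca_below u; rwa [hμu] at this
    have hxy : R.S.anc x y := R.S.anc_trans hx hlow
    calc τT u < τS y := h2
      _ ≤ τS x := R.S.timeMap_le hτS hxy
  · -- D3
    intro v x hv hx
    set u := R.T.par v with hu
    have htu : R.t u = Event.hgt := R.trans_hgt v hv
    have hdup : R.IsDupHGT u := Or.inr htu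
    obtain ⟨y, hyroot, hμu⟩ := hM2ii u hdup
    have h1 := (hC2 u y hdup hμu).1
    set z := R.lca (R.sigmaBar u ∪ R.sigmaBar v) with hz
    -- pick witnesses in σ̄ u and σ̄ v
    obtain ⟨la, hla, hfa⟩ := R.leaf_below hO1 hO2 u
    obtain ⟨lb, hlb, hfb⟩ := R.leaf_below hO1 hO2 v
    have haU : R.sig la ∈ R.sigmaBar u := ⟨la, ⟨hla, hfa⟩, rfl⟩
    have hbV : R.sig lb ∈ R.sigmaBar v := ⟨lb, ⟨hlb, hfb⟩, rfl⟩
    have huneU : (R.sigmaBar u ∪ R.sigmaBar v).Nonempty := ⟨R.sig la, Or.inl haU⟩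
    have hlcaU := R.lca_spec _ huneU
    have haz : R.S.anc (R.sig la) z := hlcaU.1 _ (Or.inl haU)
    have hbz : R.S.anc (R.sig lb) z := hlcaU.1 _ (Or.inr hbV)
    have hay : R.S.anc (R.sig la) y := by
      have := R.sigmaBar_below hrec' haU; rwa [hμu] at this
    have hb_low : R.S.anc (R.sig lb) (lowPt (μ v)) := R.sigmaBar_below hrec' hbV
    -- z is not below y
    have hnzy : ¬ R.S.anc z y := by
      intro hzy
      have hby : R.S.anc (R.sig lb) y := R.S.anc_trans hbz hzy
      have hinc := hM2iii v hv
      rw [← hu, hμu] at hinc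
      cases hμv : μ v with
      | inl c =>
        rw [hμv] at hinc hb_low
        simp only [lowPt, Sum.elim_inl, id] at hb_low
        rcases R.S.anc_comparable hb_low hby with h | h
        · exact hinc.2 h
        · obtain ⟨k, hk⟩ := h
          rcases Nat.eq_zero_or_pos k with h0 | hp
          · rw [h0] at hk
            exact hinc.2 ⟨0, hk.symm⟩
          · obtain ⟨m, rfl⟩ : ∃ m, k = m + 1 := ⟨k - 1, by omega⟩
            exact hinc.1 ⟨m, by rw [← Function.iterate_succ_apply]; exact hk⟩
      | inr y' =>
        rw [hμv] at hinc hb_low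
        simp only [lowPt, Sum.elim_inr, id] at hb_low
        rcases R.S.anc_comparable hb_low hby with h | h
        · exact hinc.2 h
        · exact hinc.1 h
    -- hence y is strictly below z
    have hyz : R.S.anc y z := by
      rcases R.S.anc_comparable hay haz with h | h
      · exact h
      · exact absurd h hnzy
    have hyz_ne : y ≠ z := fun h => hnzy (h ▸ R.S.anc_refl y)
    have hpyz : R.S.anc (R.S.par y) z := by
      obtain ⟨k, hk⟩ := hyz
      rcases Nat.eq_zero_or_pos k with h0 | hp
      · rw [h0] at hk; exact absurd hk hyz_ne
      · obtain ⟨m, rfl⟩ : ∃ m, k = m + 1 := ⟨k - 1, by omega⟩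
        exact ⟨m, by rw [← Function.iterate_succ_apply]; exact hk⟩
    calc τS x ≤ τS z := R.S.timeMap_le hτS hx
      _ ≤ τS (R.S.par y) := R.S.timeMap_le hτS hpyz
      _ < τT u := h1
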